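/- In the proof of Uhlmann's lemma, the linear map V defined on the Hilbert space A₁ (with inner product <a,b> = tr(a*b)) by V(a T₁^{1/2}) = β(a) T₂^{1/2} is a contraction: ‖β(a) T₂^{1/2}‖ ≤ ‖a T₁^{1/2}‖ for all a ∈ A₁, where β is a unital Schwarz map, T₁ ∈ A₁⁺ invertible, T₂ ∈ A₂⁺, and tr(T₂ β(a)) ≤ tr(T₁ a) for all a ∈ A₁⁺. -/

import Mathlib

open Matrix
open scoped ComplexOrder

lemma trace_nonneg_of_posSemidef {k : ℕ} {M : Matrix (Fin k) (Fin k) ℂ}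
    (hM : M.PosSemidef) : 0 ≤ M.trace := by
  rw [Matrix.trace]
  refine Finset.sum_nonneg fun i _ => ?_
  have := hM.dotProduct_mulVec_nonneg (Pi.single i 1)
  simpa [dotProduct, mulVec, Pi.single_apply] using this

section sqrtPort
open scoped MatrixOrder

noncomputable def Matrix.PosSemidef.sqrt {k : ℕ} {A : Matrix (Fin k) (Fin k) ℂ}
    (hA : A.PosSemidef) : Matrix (Fin k) (Fin k) ℂ :=
  hA.1.cfc Real.sqrt

lemma Matrix.PosSemidef.sqrt_mul_self {k : ℕ} {A : Matrix (Fin k) (Fin k) ℂ}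
    (hA : A.PosSemidef) : hA.sqrt * hA.sqrt = A := by
  have h0 : 0 ≤ A := Matrix.nonneg_iff_posSemidef.mpr hA
  unfold Matrix.PosSemidef.sqrt
  rw [← hA.1.cfc_eq, ← cfc_mul Real.sqrt Real.sqrt A]
  conv_rhs => rw [← cfc_id' ℝ A]
  refine cfc_congr fun x hx => ?_
  exact Real.mul_self_sqrt (spectrum_nonneg_of_nonneg h0 hx)

lemma Matrix.PosSemidef.posSemidef_sqrt {k : ℕ} {A : Matrix (Fin k) (Fin k) ℂ}
    (hA : A.PosSemidef) : hA.sqrt.PosSemidef := by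
  unfold Matrix.PosSemidef.sqrt
  rw [← hA.1.cfc_eq, ← Matrix.nonneg_iff_posSemidef]
  exact cfc_nonneg fun x _ => Real.sqrt_nonneg x

end sqrtPort

lemma trace_mul_nonneg_of_posSemidef {k : ℕ} {A B : Matrix (Fin k) (Fin k) ℂ}
    (hA : A.PosSemidef) (hB : B.PosSemidef) : 0 ≤ (A * B).trace := by
  have h1 : A * B = hA.sqrt * (hA.sqrt * B) := by
    rw [← mul_assoc, hA.sqrt_mul_self]
  rw [h1, Matrix.trace_mul_comm]
  have : (hA.sqrt * B * hA.sqrt).PosSemidef := by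
    have := hB.conjTranspose_mul_mul_same hA.sqrt
    rwa [hA.posSemidef_sqrt.1] at this
  exact trace_nonneg_of_posSemidef this

lemma trace_sqrt_aux {k : ℕ} {T : Matrix (Fin k) (Fin k) ℂ} (hT : T.PosSemidef)
    (M : Matrix (Fin k) (Fin k) ℂ) :
    (star (M * hT.sqrt) * (M * hT.sqrt)).trace = (T * (star M * M)).trace := by
  have h1 : star (M * hT.sqrt) = hT.sqrt * star M := by
    rw [Matrix.star_mul]
    congr 1
    exact hT.posSemidef_sqrt.1
  rw [h1, mul_assoc, Matrix.trace_mul_comm]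
  have h2 : star M * (M * hT.sqrt) * hT.sqrt = star M * M * (hT.sqrt * hT.sqrt) := by
    simp [mul_assoc]
  rw [h2, hT.sqrt_mul_self, Matrix.trace_mul_comm]

theorem uhlmann_contraction {n m : ℕ}
    (A₁ : StarSubalgebra ℂ (Matrix (Fin n) (Fin n) ℂ))
    (A₂ : StarSubalgebra ℂ (Matrix (Fin m) (Fin m) ℂ))
    (β : A₁ →ₗ[ℂ] A₂) (hβ1 : β 1 = 1)
    (hβS : ∀ x : A₁, ((↑(β (star x * x)) : Matrix (Fin m) (Fin m) ℂ) -
      star (↑(β x) : Matrix (Fin m) (Fin m) ℂ) *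
        (↑(β x) : Matrix (Fin m) (Fin m) ℂ)).PosSemidef)
    (T₁ : A₁) (T₂ : A₂)
    (hT₁ : (↑T₁ : Matrix (Fin n) (Fin n) ℂ).PosDef)
    (hT₂ : (↑T₂ : Matrix (Fin m) (Fin m) ℂ).PosSemidef)
    (hT : ∀ a : A₁, (↑a : Matrix (Fin n) (Fin n) ℂ).PosSemidef →
      ((↑T₂ : Matrix (Fin m) (Fin m) ℂ) * (↑(β a) : Matrix (Fin m) (Fin m) ℂ)).trace ≤
        ((↑T₁ : Matrix (Fin n) (Fin n) ℂ) * (↑a : Matrix (Fin n) (Fin n) ℂ)).trace) :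
    ∀ a : A₁,
      Real.sqrt ((star ((↑(β a) : Matrix (Fin m) (Fin m) ℂ) * hT₂.1.cfc Real.sqrt) *
        ((↑(β a) : Matrix (Fin m) (Fin m) ℂ) * hT₂.1.cfc Real.sqrt)).trace.re) ≤
      Real.sqrt ((star ((↑a : Matrix (Fin n) (Fin n) ℂ) * hT₁.posSemidef.1.cfc Real.sqrt) *
        ((↑a : Matrix (Fin n) (Fin n) ℂ) * hT₁.posSemidef.1.cfc Real.sqrt)).trace.re) := by
  intro a
  have hS₂ : hT₂.1.cfc Real.sqrt = hT₂.sqrt := rfl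
  have hS₁ : hT₁.posSemidef.1.cfc Real.sqrt = hT₁.posSemidef.sqrt := rfl
  rw [hS₂, hS₁]
  apply Real.sqrt_le_sqrt
  set Ba : Matrix (Fin m) (Fin m) ℂ := ↑(β a) with hBa
  set Pa : Matrix (Fin n) (Fin n) ℂ := ↑a with hPa
  have key : (star (Ba * hT₂.sqrt) * (Ba * hT₂.sqrt)).trace ≤
      (star (Pa * hT₁.posSemidef.sqrt) * (Pa * hT₁.posSemidef.sqrt)).trace := by
    rw [trace_sqrt_aux hT₂ Ba, trace_sqrt_aux hT₁.posSemidef Pa]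
    have hD := hβS a
    have step1 : ((↑T₂ : Matrix (Fin m) (Fin m) ℂ) * (star Ba * Ba)).trace ≤
        ((↑T₂ : Matrix (Fin m) (Fin m) ℂ) *
          (↑(β (star a * a)) : Matrix (Fin m) (Fin m) ℂ)).trace := by
      have hpos := trace_mul_nonneg_of_posSemidef hT₂ hD
      rw [mul_sub, Matrix.trace_sub, sub_nonneg] at hpos
      exact hpos
    have hcoe : (↑(star a * a) : Matrix (Fin n) (Fin n) ℂ) = star Pa * Pa := rfl
    have hpsd : (↑(star a * a) : Matrix (Fin n) (Fin n) ℂ).PosSemidef := by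
      rw [hcoe]
      exact Matrix.posSemidef_conjTranspose_mul_self Pa
    have step2 := hT (star a * a) hpsd
    rw [hcoe] at step2
    exact step1.trans step2
  exact (Complex.le_def.mp key).1
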